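/- Let g : ℝ → ℝ be twice continuously differentiable with g, g', g'' ∈ L²(ℝ), and with g(x) → 0 and g'(x) → 0 as |x| → ∞. Then sup_{x∈ℝ} |g'(x)| ≤ √2 · ‖g‖_{L²}^{1/4} · ‖g''‖_{L²}^{3/4}. -/

import Mathlib

open MeasureTheory Filter Set intervalIntegral

private lemma intSqMul {u v : ℝ → ℝ} (hu : Continuous u) (hv : Continuous v)
    (hu2 : Integrable (fun x => u x ^ 2)) (hv2 : Integrable (fun x => v x ^ 2)) :
    Integrable (fun x => u x * v x) := by
  refine Integrable.mono' ((hu2.add hv2).div_const 2) ((hu.mul hv).aestronglyMeasurable)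
    (ae_of_all _ fun x => ?_)
  have h := sq_nonneg (|u x| - |v x|)
  rw [Real.norm_eq_abs, abs_mul]
  simp only [Pi.add_apply]
  nlinarith [sq_abs (u x), sq_abs (v x), abs_nonneg (u x), abs_nonneg (v x)]

private lemma csAbs {u v : ℝ → ℝ} (hu : MeasureTheory.MemLp u 2 (volume : Measure ℝ))
    (hv : MeasureTheory.MemLp v 2 (volume : Measure ℝ)) :
    ∫ x, |u x| * |v x| ≤ (∫ x, u x ^ 2) ^ ((1:ℝ)/2) * (∫ x, v x ^ 2) ^ ((1:ℝ)/2) := by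
  have h2 : Real.HolderConjugate 2 2 := Real.HolderConjugate.two_two
  have hofr : (ENNReal.ofReal (2:ℝ)) = 2 := by norm_num
  have hu' : MeasureTheory.MemLp (fun x => |u x|) (ENNReal.ofReal (2:ℝ)) volume := by
    rw [hofr]; exact hu.norm
  have hv' : MeasureTheory.MemLp (fun x => |v x|) (ENNReal.ofReal (2:ℝ)) volume := by
    rw [hofr]; exact hv.norm
  have key := MeasureTheory.integral_mul_le_Lp_mul_Lq_of_nonneg h2
    (ae_of_all _ fun x => abs_nonneg (u x)) (ae_of_all _ fun x => abs_nonneg (v x)) hu' hv'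
  have habs : ∀ w : ℝ, |w| ^ (2:ℝ) = w ^ 2 := fun w => by
    rw [show (2:ℝ) = ((2:ℕ):ℝ) by norm_num, Real.rpow_natCast, sq_abs]
  simpa [habs] using key

/-- The `L²(ℝ)` norm `(∫ℝ |g(x)|² dx)^(1/2)`. -/
noncomputable def L2Norm (g : ℝ → ℝ) : ℝ := (∫ x : ℝ, (g x) ^ 2) ^ ((1 : ℝ) / 2)

/-- `g ∈ L²(ℝ)`, i.e. `∫ℝ |g(x)|² dx < ∞`. -/
def MemL2 (g : ℝ → ℝ) : Prop := MeasureTheory.Integrable fun x => (g x) ^ 2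


/-- If `g ∈ C²` with `g, g', g'' ∈ L²(ℝ)` and `g(x), g'(x) → 0` as
`|x| → ∞`, then `sup_x |g'(x)| ≤ √2 ‖g‖^{1/4} ‖g''‖^{3/4}`. -/
theorem sobolev_sup_bound_deriv
    (g : ℝ → ℝ) (hg : ContDiff ℝ 2 g)
    (hL2 : MemL2 g) (hL2' : MemL2 (deriv g)) (hL2'' : MemL2 (iteratedDeriv 2 g))
    (hdecay : Tendsto g (cocompact ℝ) (nhds 0))
    (hdecay' : Tendsto (deriv g) (cocompact ℝ) (nhds 0)) :
    ∀ x : ℝ,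
      |deriv g x|
        ≤ Real.sqrt 2 * L2Norm g ^ ((1:ℝ)/4) * L2Norm (iteratedDeriv 2 g) ^ ((3:ℝ)/4) := by
  replace hL2 : MeasureTheory.Integrable (fun x => (g x) ^ 2) := hL2
  replace hL2' : MeasureTheory.Integrable (fun x => (deriv g x) ^ 2) := hL2'
  replace hL2'' : MeasureTheory.Integrable (fun x => (iteratedDeriv 2 g x) ^ 2) := hL2''
  intro x₀
  have h2d : iteratedDeriv 2 g = deriv (deriv g) := by
    rw [iteratedDeriv_succ, iteratedDeriv_one]
  set f := deriv g with hfdef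
  set dd := deriv f with hdddef
  have hgd : Differentiable ℝ g := hg.differentiable two_ne_zero
  have hfd : Differentiable ℝ f := by
    have := hg.differentiable_iteratedDeriv 1 (by norm_num)
    rwa [iteratedDeriv_one] at this
  have hgc : Continuous g := hg.continuous
  have hfc : Continuous f := hfd.continuous
  have hddc : Continuous dd := by
    have := hg.continuous_iteratedDeriv 2 le_rfl
    rwa [h2d] at this
  have hL2dd : MeasureTheory.Integrable fun x => dd x ^ 2 := by rwa [h2d] at hL2''
  have mA : MeasureTheory.MemLp g 2 (volume : Measure ℝ) :=
    (MeasureTheory.memLp_two_iff_integrable_sq hgc.aestronglyMeasurable).mpr hL2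
  have mB : MeasureTheory.MemLp f 2 (volume : Measure ℝ) :=
    (MeasureTheory.memLp_two_iff_integrable_sq hfc.aestronglyMeasurable).mpr hL2'
  have mC : MeasureTheory.MemLp dd 2 (volume : Measure ℝ) :=
    (MeasureTheory.memLp_two_iff_integrable_sq hddc.aestronglyMeasurable).mpr hL2dd
  set A := ∫ x, g x ^ 2 with hAdef
  set B := ∫ x, f x ^ 2 with hBdef
  set C := ∫ x, dd x ^ 2 with hCdef
  have hA : 0 ≤ A := integral_nonneg fun x => sq_nonneg _
  have hB : 0 ≤ B := integral_nonneg fun x => sq_nonneg _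
  have hC : 0 ≤ C := integral_nonneg fun x => sq_nonneg _
  have ifd : MeasureTheory.Integrable (fun x => f x * dd x) := intSqMul hfc hddc hL2' hL2dd
  have igd : MeasureTheory.Integrable (fun x => g x * dd x) := intSqMul hgc hddc hL2 hL2dd
  have ifdabs : MeasureTheory.Integrable (fun x => |f x| * |dd x|) := by
    simpa [abs_mul] using ifd.abs
  have igdabs : MeasureTheory.Integrable (fun x => |g x| * |dd x|) := by
    simpa [abs_mul] using igd.abs
  have tfB : Tendsto f atBot (nhds 0) := hdecay'.mono_left atBot_le_cocompact
  have tfT : Tendsto f atTop (nhds 0) := hdecay'.mono_left atTop_le_cocompact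
  have tgB : Tendsto g atBot (nhds 0) := hdecay.mono_left atBot_le_cocompact
  have tgT : Tendsto g atTop (nhds 0) := hdecay.mono_left atTop_le_cocompact
  -- Step A : f x₀ ^ 2 = ∫_{Iic x₀} 2 * (f * dd)
  have hdsq : ∀ t : ℝ, HasDerivAt (fun t => f t ^ 2) (2 * (f t * dd t)) t := fun t => by
    have h : HasDerivAt (fun t => f t ^ 2) (((2:ℕ):ℝ) * f t ^ (2 - 1) * deriv f t) t :=
      (hfd t).hasDerivAt.pow 2
    convert h using 1
    ring
  have keyA : f x₀ ^ 2 = ∫ t in Iic x₀, 2 * (f t * dd t) := by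
    have := integral_Iic_of_hasDerivAt_of_tendsto' (a := x₀) (fun t _ => hdsq t)
      ((ifd.const_mul 2).integrableOn) (by simpa using tfB.pow 2)
    rw [this]; ring
  -- bound step A
  have boundA : f x₀ ^ 2 ≤ 2 * (B ^ ((1:ℝ)/2) * C ^ ((1:ℝ)/2)) := by
    have h1 : f x₀ ^ 2 ≤ ∫ t in Iic x₀, 2 * (|f t| * |dd t|) := by
      rw [keyA]
      refine setIntegral_mono ((ifd.const_mul 2).integrableOn)
        ((ifdabs.const_mul 2).integrableOn) fun t => ?_
      have := le_abs_self (f t * dd t)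
      rw [abs_mul] at this
      linarith
    have h2 : ∫ t in Iic x₀, 2 * (|f t| * |dd t|) ≤ ∫ t, 2 * (|f t| * |dd t|) :=
      setIntegral_le_integral (ifdabs.const_mul 2)
        (ae_of_all _ fun t => by positivity)
    have h3 : ∫ t, 2 * (|f t| * |dd t|) = 2 * ∫ t, |f t| * |dd t| := integral_const_mul 2 _
    have h4 := csAbs mB mC
    calc f x₀ ^ 2 ≤ ∫ t, 2 * (|f t| * |dd t|) := h1.trans h2
      _ = 2 * ∫ t, |f t| * |dd t| := h3
      _ ≤ 2 * (B ^ ((1:ℝ)/2) * C ^ ((1:ℝ)/2)) := by linarith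
  -- Step B : B ≤ A^(1/2) * C^(1/2)
  have hF' : ∀ t : ℝ, HasDerivAt (fun t => g t * f t) (f t ^ 2 + g t * dd t) t := fun t => by
    have h : HasDerivAt (fun t => g t * f t) (deriv g t * f t + g t * deriv f t) t :=
      (hgd t).hasDerivAt.mul (hfd t).hasDerivAt
    convert h using 1
    ring
  have hint : MeasureTheory.Integrable (fun t => f t ^ 2 + g t * dd t) := hL2'.add igd
  have tFB : Tendsto (fun t => g t * f t) atBot (nhds 0) := by simpa using tgB.mul tfB
  have tFT : Tendsto (fun t => g t * f t) atTop (nhds 0) := by simpa using tgT.mul tfT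
  have iIic : ∫ t in Iic 0, (f t ^ 2 + g t * dd t) = g 0 * f 0 - 0 :=
    integral_Iic_of_hasDerivAt_of_tendsto' (fun t _ => hF' t) hint.integrableOn tFB
  have iIoi : ∫ t in Ioi 0, (f t ^ 2 + g t * dd t) = 0 - g 0 * f 0 :=
    integral_Ioi_of_hasDerivAt_of_tendsto' (fun t _ => hF' t) hint.integrableOn tFT
  have total : ∫ t, (f t ^ 2 + g t * dd t) = 0 := by
    rw [← integral_Iic_add_Ioi hint.integrableOn hint.integrableOn, iIic, iIoi]; ring
  have hBeq : B = - ∫ t, g t * dd t := by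
    rw [integral_add hL2' igd] at total
    rw [hBdef]; linarith
  have boundB : B ≤ A ^ ((1:ℝ)/2) * C ^ ((1:ℝ)/2) := by
    have h1 : - ∫ t, g t * dd t ≤ ∫ t, |g t| * |dd t| := by
      rw [← MeasureTheory.integral_neg]
      refine integral_mono igd.neg igdabs fun t => ?_
      have h := neg_le_abs (g t * dd t)
      rw [abs_mul] at h
      exact h
    have h2 := csAbs mA mC
    rw [hBeq]
    exact h1.trans h2
  -- Combine
  have boundA' : f x₀ ^ 2 ≤ 2 * (A ^ ((1:ℝ)/4) * C ^ ((3:ℝ)/4)) := by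
    have hBr : B ^ ((1:ℝ)/2) ≤ (A ^ ((1:ℝ)/2) * C ^ ((1:ℝ)/2)) ^ ((1:ℝ)/2) :=
      Real.rpow_le_rpow hB boundB (by norm_num)
    have hmul : (A ^ ((1:ℝ)/2) * C ^ ((1:ℝ)/2)) ^ ((1:ℝ)/2)
        = A ^ ((1:ℝ)/4) * C ^ ((1:ℝ)/4) := by
      rw [Real.mul_rpow (Real.rpow_nonneg hA _) (Real.rpow_nonneg hC _),
        ← Real.rpow_mul hA, ← Real.rpow_mul hC]
      norm_num
    have hCC : C ^ ((1:ℝ)/4) * C ^ ((1:ℝ)/2) = C ^ ((3:ℝ)/4) := by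
      rw [← Real.rpow_add' hC (by norm_num)]
      norm_num
    have hCnn : (0:ℝ) ≤ C ^ ((1:ℝ)/2) := Real.rpow_nonneg hC _
    calc f x₀ ^ 2 ≤ 2 * (B ^ ((1:ℝ)/2) * C ^ ((1:ℝ)/2)) := boundA
      _ ≤ 2 * ((A ^ ((1:ℝ)/4) * C ^ ((1:ℝ)/4)) * C ^ ((1:ℝ)/2)) := by
          have := mul_le_mul_of_nonneg_right (hmul ▸ hBr) hCnn
          linarith
      _ = 2 * (A ^ ((1:ℝ)/4) * C ^ ((3:ℝ)/4)) := by rw [mul_assoc, hCC]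
  -- take square roots
  have hfin : |f x₀| ≤ Real.sqrt 2 * A ^ ((1:ℝ)/8) * C ^ ((3:ℝ)/8) := by
    have h1 : |f x₀| = Real.sqrt (f x₀ ^ 2) := (Real.sqrt_sq_eq_abs _).symm
    rw [h1]
    have h2 := Real.sqrt_le_sqrt boundA'
    refine h2.trans (le_of_eq ?_)
    rw [show (2:ℝ) * (A ^ ((1:ℝ)/4) * C ^ ((3:ℝ)/4))
        = 2 * A ^ ((1:ℝ)/4) * C ^ ((3:ℝ)/4) by ring,
      Real.sqrt_mul (by positivity), Real.sqrt_mul (by norm_num),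
      Real.sqrt_eq_rpow (A ^ ((1:ℝ)/4)), Real.sqrt_eq_rpow (C ^ ((3:ℝ)/4)),
      ← Real.rpow_mul hA, ← Real.rpow_mul hC]
    norm_num
  -- rewrite goal
  have hgoal : Real.sqrt 2 * L2Norm g ^ ((1:ℝ)/4) * L2Norm (iteratedDeriv 2 g) ^ ((3:ℝ)/4)
      = Real.sqrt 2 * A ^ ((1:ℝ)/8) * C ^ ((3:ℝ)/8) := by
    unfold L2Norm
    rw [h2d]
    rw [← hAdef, ← hCdef, ← Real.rpow_mul hA, ← Real.rpow_mul hC]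
    norm_num
  rw [hgoal]
  exact hfin
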